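/- A (non-abelian) nilpotent almost abelian Lie algebra never admits a complex parallelisable structure, i.e. there is no integrable complex structure J on g with J[x,y] = [Jx,y] for all x,y (making (g,J) a complex Lie algebra). -/

import Mathlib

/-- A (non-abelian) nilpotent almost abelian Lie algebra never admits a
complex parallelisable structure, i.e. there is no integrable complex structure `J` on `g`
with `J⁅x,y⁆ = ⁅Jx, y⁆` for all `x, y` (making `(g, J)` a complex Lie algebra). -/
theorem stmt8 {g : Type*} [LieRing g] [LieAlgebra ℝ g] [FiniteDimensional ℝ g]
    [LieRing.IsNilpotent g] (hnab : ¬ IsLieAbelian g)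
    (a : LieIdeal ℝ g) (habel : IsLieAbelian a)
    (hcodim : Module.finrank ℝ a + 1 = Module.finrank ℝ g) :
    ¬ ∃ J : g →ₗ[ℝ] g, (∀ x, J (J x) = -x) ∧
        (∀ x y : g, ⁅J x, J y⁆ - ⁅x, y⁆ - J ⁅J x, y⁆ - J ⁅x, J y⁆ = 0) ∧
        (∀ x y : g, J ⁅x, y⁆ = ⁅J x, y⁆) := by
  rintro ⟨J, hJ2, -, hJb⟩
  -- brackets inside a vanish
  have hab : ∀ v w : g, v ∈ a → w ∈ a → ⁅v, w⁆ = 0 := fun v w hv hw =>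
    congrArg Subtype.val (habel.trivial ⟨v, hv⟩ ⟨w, hw⟩)
  set S : Submodule ℝ g := a.toSubmodule with hS
  -- find x ∉ a
  have hne : S ≠ ⊤ := by
    intro h
    have h2 : Module.finrank ℝ S = Module.finrank ℝ g := by rw [h]; exact finrank_top ℝ g
    have h3 : Module.finrank ℝ S = Module.finrank ℝ a := rfl
    omega
  obtain ⟨x, -, hx⟩ := SetLike.exists_of_lt hne.lt_top
  -- S ⊔ span{x} = ⊤
  have hsup : S ⊔ Submodule.span ℝ {x} = ⊤ := by
    apply Submodule.eq_top_of_finrank_eq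
    have hlt : S < S ⊔ Submodule.span ℝ {x} := by
      refine lt_of_le_of_ne le_sup_left fun h => hx ?_
      rw [h]
      exact Submodule.mem_sup_right (Submodule.mem_span_singleton_self x)
    have h1 : Module.finrank ℝ S < Module.finrank ℝ (S ⊔ Submodule.span ℝ {x} : Submodule ℝ g) :=
      Submodule.finrank_lt_finrank_of_lt hlt
    have h2 : Module.finrank ℝ (S ⊔ Submodule.span ℝ {x} : Submodule ℝ g) ≤ Module.finrank ℝ g :=
      Submodule.finrank_le _
    have h3 : Module.finrank ℝ S = Module.finrank ℝ a := rfl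
    omega
  -- decomposition of any element
  have hdec : ∀ y : g, ∃ c : ℝ, ∃ v ∈ a, y = c • x + v := by
    intro y
    have hy : y ∈ S ⊔ Submodule.span ℝ {x} := hsup ▸ Submodule.mem_top
    obtain ⟨v, hv, z, hz, hvy⟩ := Submodule.mem_sup.mp hy
    obtain ⟨c, rfl⟩ := Submodule.mem_span_singleton.mp hz
    exact ⟨c, v, hv, by rw [← hvy]; abel⟩
  -- there exists u ∈ a with ⁅x,u⁆ ≠ 0
  have hu : ∃ u ∈ a, ⁅x, u⁆ ≠ 0 := by
    by_contra h
    push_neg at h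
    apply hnab
    constructor
    intro y z
    obtain ⟨c, v, hv, rfl⟩ := hdec y
    obtain ⟨d, w, hw, rfl⟩ := hdec z
    have h1 : ⁅x, w⁆ = 0 := h w hw
    have h2 : ⁅x, v⁆ = 0 := h v hv
    have h3 : ⁅v, w⁆ = 0 := hab v w hv hw
    have h4 : ⁅v, x⁆ = 0 := by rw [← neg_eq_zero, ← lie_skew]; simp [h2]
    simp [lie_add, add_lie, lie_smul, smul_lie, h1, h2, h3, h4]
  obtain ⟨u, hu_mem, hu_ne⟩ := hu
  obtain ⟨c, v, hv, hJx⟩ := hdec (J x)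
  have key : J ⁅x, u⁆ = c • ⁅x, u⁆ := by
    rw [hJb, hJx, add_lie, smul_lie, hab v u hv hu_mem, add_zero]
  have key2 : -⁅x, u⁆ = (c * c) • ⁅x, u⁆ := by
    rw [← hJ2 ⁅x, u⁆, key, map_smul, key, smul_smul]
  have : (c * c + 1) • ⁅x, u⁆ = 0 := by
    rw [add_smul, one_smul, ← key2]; abel
  rcases smul_eq_zero.mp this with h | h
  · nlinarith [sq_nonneg c]
  · exact hu_ne h
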